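/- Let n ∈ ℕ and let t₁,…,tₙ be real numbers with 0 ≤ tᵢ ≤ 2.5 for all i. Then (1+t₁)²(1+t₂)²⋯(1+tₙ)² ≥ (1 + (t₁+t₂+⋯+tₙ)/n)ⁿ. Moreover, if tᵢ > 0 for some i, the inequality is strict. -/
import Mathlib

open Real Finset

lemma exp_125_lt : Real.exp 1.25 < 3.5 := by
  have h5 : Real.exp 5 < 150.0625 := by
    have : Real.exp 5 = Real.exp 1 ^ 5 := by
      rw [← Real.exp_nat_mul]; norm_num
    rw [this]
    calc Real.exp 1 ^ 5 < 2.7182818286 ^ 5 := by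
          apply pow_lt_pow_left₀ Real.exp_one_lt_d9 (Real.exp_pos 1).le
          norm_num
      _ < 150.0625 := by norm_num
  have h4 : Real.exp 1.25 ^ 4 = Real.exp 5 := by
    rw [← Real.exp_nat_mul]; norm_num
  have h35 : (150.0625:ℝ) = 3.5 ^ 4 := by norm_num
  have : Real.exp 1.25 ^ 4 < 3.5 ^ 4 := by rw [h4, ← h35]; exact h5
  exact lt_of_pow_lt_pow_left₀ 4 (by norm_num) this

lemma half_lt_log (t : ℝ) (h0 : 0 < t) (h1 : t ≤ 2.5) : t / 2 < Real.log (1 + t) := by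
  have hlog35 : (1.25 : ℝ) < Real.log 3.5 :=
    (Real.lt_log_iff_exp_lt (by norm_num)).2 exp_125_lt
  rcases eq_or_lt_of_le h1 with h | h
  · rw [h]; norm_num; linarith
  · -- strict concavity of log: log(1+t) > (1 - t/2.5) * log 1 + (t/2.5) * log 3.5
    have key := strictConcaveOn_log_Ioi.2 (x := 1) (y := 3.5)
      (show (1:ℝ) ∈ Set.Ioi (0:ℝ) by norm_num)
      (show (3.5:ℝ) ∈ Set.Ioi (0:ℝ) by norm_num)
      (show (1:ℝ) ≠ 3.5 by norm_num)
      (show (0:ℝ) < 1 - t/2.5 by norm_num; linarith)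
      (show (0:ℝ) < t/2.5 by positivity)
      (by ring)
    rw [Real.log_one] at key
    have hx : (1 - t/2.5) • (1:ℝ) + (t/2.5) • (3.5:ℝ) = 1 + t := by
      simp [smul_eq_mul]; ring
    rw [hx] at key
    simp only [smul_eq_mul, mul_zero, zero_add] at key
    have h2 : t/2.5 * 1.25 < t/2.5 * Real.log 3.5 :=
      mul_lt_mul_of_pos_left hlog35 (by positivity)
    have h3 : t/2.5 * 1.25 = t/2 := by ring
    linarith

lemma exp_lt_sq (t : ℝ) (h0 : 0 < t) (h1 : t ≤ 2.5) : Real.exp t < (1 + t) ^ 2 := by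
  have h := half_lt_log t h0 h1
  have h1t : (0:ℝ) < 1 + t := by linarith
  calc Real.exp t < Real.exp (2 * Real.log (1 + t)) := by
        apply Real.exp_lt_exp.2; linarith
    _ = (1 + t) ^ 2 := by
        rw [show (2:ℝ) * Real.log (1+t) = ((2:ℕ):ℝ) * Real.log (1+t) by norm_num,
          Real.exp_nat_mul, Real.exp_log h1t]

theorem stmt7 (n : ℕ) (hn : 0 < n) (t : Fin n → ℝ)
    (ht : ∀ i, 0 ≤ t i ∧ t i ≤ 2.5) :
    (1 + (∑ i, t i) / n) ^ n ≤ ∏ i, (1 + t i) ^ 2 ∧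
    ((∃ i, 0 < t i) → (1 + (∑ i, t i) / n) ^ n < ∏ i, (1 + t i) ^ 2) := by
  set S := ∑ i, t i with hS
  have hS0 : 0 ≤ S := Finset.sum_nonneg fun i _ => (ht i).1
  have hle : ∀ i, Real.exp (t i) ≤ (1 + t i) ^ 2 := by
    intro i
    rcases eq_or_lt_of_le (ht i).1 with h | h
    · rw [← h]; norm_num
    · exact (exp_lt_sq _ h (ht i).2).le
  have h1 : (1 + S / n) ^ n ≤ Real.exp S := by
    calc (1 + S / n) ^ n ≤ Real.exp (S / n) ^ n := by
          apply pow_le_pow_left₀ (by positivity)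
          have := Real.add_one_le_exp (S / n); linarith
      _ = Real.exp (n * (S / n)) := (Real.exp_nat_mul _ n).symm
      _ = Real.exp S := by
          congr 1; field_simp
  have h2 : Real.exp S = ∏ i, Real.exp (t i) := by
    rw [← Real.exp_sum]
  constructor
  · refine h1.trans ?_
    rw [h2]
    exact Finset.prod_le_prod (fun i _ => (Real.exp_pos _).le) (fun i _ => hle i)
  · rintro ⟨j, hj⟩
    refine h1.trans_lt ?_
    rw [h2]
    exact Finset.prod_lt_prod (fun i _ => Real.exp_pos _) (fun i _ => hle i)
      ⟨j, Finset.mem_univ j, exp_lt_sq _ hj (ht j).2⟩
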